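/- Let n ≥ 3 and 1 ≤ h ≤ n − 1. Suppose F_e ⊆ E(Q_n) with |F_e| ≤ h and F₁, F₂ ⊆ V(Q_n) with |F₁|, |F₂| ≤ n − h and |F₁ Δ F₂| ≥ 3. Then there is an edge of Q_n − F_e between V − (F₁ ∪ F₂) and F₁ Δ F₂. -/

import Mathlib

/-- The n-dimensional hypercube: vertices are `Fin n → Bool`,
adjacent iff Hamming distance exactly 1. -/
def Qn (n : ℕ) : SimpleGraph (Fin n → Bool) where
  Adj u v := hammingDist u v = 1
  symm := ⟨fun u v (h : hammingDist u v = 1) => by show hammingDist v u = 1; rwa [hammingDist_comm]⟩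
  loopless := ⟨fun u (h : hammingDist u u = 1) => by simp [hammingDist_self] at h⟩

instance (n : ℕ) : DecidableRel (Qn n).Adj :=
  fun u v => inferInstanceAs (Decidable (hammingDist u v = 1))

open Finset

variable {n : ℕ}

/-- parity of a vertex -/
def par (v : Fin n → Bool) : ZMod 2 := ∑ i, if v i then 1 else 0

lemma dist_one_iff (u w : Fin n → Bool) :
    hammingDist u w = 1 ↔ ∃ i, w = Function.update u i (!u i) := by
  constructor
  · intro hd
    rw [hammingDist, Finset.card_eq_one] at hd
    obtain ⟨i, hi⟩ := hd
    refine ⟨i, funext fun j => ?_⟩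
    by_cases hj : j = i
    · subst hj
      have : j ∈ ({j} : Finset (Fin n)) := Finset.mem_singleton_self j
      rw [← hi, Finset.mem_filter] at this
      simp only [Function.update_self]
      cases hu : u j <;> cases hw : w j <;> simp_all
    · have : j ∉ ({i} : Finset (Fin n)) := by simp [hj]
      rw [← hi, Finset.mem_filter] at this
      simp only [Function.update_of_ne hj]
      push_neg at this
      exact (this (Finset.mem_univ j)).symm
  · rintro ⟨i, rfl⟩
    rw [hammingDist]
    convert Finset.card_singleton i
    ext j
    simp only [Finset.mem_filter, Finset.mem_univ, true_and, Finset.mem_singleton]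
    by_cases hj : j = i
    · subst hj; simp [Function.update_self]
    · simp [Function.update_of_ne hj, hj]

lemma par_update (u : Fin n → Bool) (i : Fin n) :
    par (Function.update u i (!u i)) = par u + 1 := by
  unfold par
  have key : ∀ (w : Fin n → Bool), (∑ j, if w j then (1 : ZMod 2) else 0)
      = (if w i then 1 else 0) + ∑ j ∈ Finset.univ.erase i, (if w j then (1:ZMod 2) else 0) := by
    intro w
    rw [← Finset.add_sum_erase _ _ (Finset.mem_univ i)]
  rw [key, key u]
  have h2 : ∑ j ∈ Finset.univ.erase i, (if Function.update u i (!u i) j then (1:ZMod 2) else 0)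
      = ∑ j ∈ Finset.univ.erase i, (if u j then (1:ZMod 2) else 0) := by
    apply Finset.sum_congr rfl
    intro j hj
    rw [Function.update_of_ne (Finset.ne_of_mem_erase hj)]
  rw [h2, Function.update_self]
  have two : (2 : ZMod 2) = 0 := rfl
  cases hu : u i <;>
    simp only [Bool.not_true, Bool.not_false, if_true, if_false] <;>
    ring_nf <;> simp [two]

/-- neighbors of u in Qn -/
def nbr (u : Fin n → Bool) : Finset (Fin n → Bool) :=
  Finset.univ.filter (fun w => hammingDist u w = 1)

lemma mem_nbr {u w : Fin n → Bool} : w ∈ nbr u ↔ hammingDist u w = 1 := by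
  simp [nbr]

lemma nbr_eq_image (u : Fin n → Bool) :
    nbr u = Finset.univ.image (fun i => Function.update u i (!u i)) := by
  ext w
  simp only [mem_nbr, Finset.mem_image, Finset.mem_univ, true_and]
  rw [dist_one_iff]
  exact ⟨fun ⟨i, hi⟩ => ⟨i, hi.symm⟩, fun ⟨i, hi⟩ => ⟨i, hi.symm⟩⟩

lemma update_flip_inj (u : Fin n → Bool) :
    Function.Injective (fun i => Function.update u i (!u i)) := by
  intro i j hij
  by_contra hne
  have h1 : Function.update u i (!u i) i = Function.update u j (!u j) i := congrFun hij i
  rw [Function.update_self, Function.update_of_ne hne] at h1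
  cases u i <;> simp at h1

lemma card_nbr (u : Fin n → Bool) : (nbr u).card = n := by
  rw [nbr_eq_image, Finset.card_image_of_injective _ (update_flip_inj u)]
  simp

lemma par_nbr {u w : Fin n → Bool} (hw : w ∈ nbr u) : par w = par u + 1 := by
  rw [mem_nbr, dist_one_iff] at hw
  obtain ⟨i, rfl⟩ := hw
  exact par_update u i

lemma card_common {u v : Fin n → Bool} (huv : u ≠ v) :
    (nbr u ∩ nbr v).card ≤ 2 := by
  rcases Finset.eq_empty_or_nonempty (nbr u ∩ nbr v) with he | ⟨w₀, hw₀⟩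
  · simp [he]
  · rw [Finset.mem_inter, mem_nbr, mem_nbr, dist_one_iff, dist_one_iff] at hw₀
    obtain ⟨⟨i₀, hi₀⟩, ⟨j₀, hj₀⟩⟩ := hw₀
    have key : nbr u ∩ nbr v ⊆ {Function.update u i₀ (!u i₀), Function.update u j₀ (!u j₀)} := by
      intro w hw
      rw [Finset.mem_inter, mem_nbr, mem_nbr, dist_one_iff, dist_one_iff] at hw
      obtain ⟨⟨i, hi⟩, ⟨j, hj⟩⟩ := hw
      -- w = update u i (!u i) = update v j (!v j); show i = i₀ or i = j₀
      have hwu : ∀ k, k ≠ i → w k = u k := by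
        intro k hk; rw [hi, Function.update_of_ne hk]
      have hwv : ∀ k, k ≠ j → w k = v k := by
        intro k hk; rw [hj, Function.update_of_ne hk]
      have hw0u : ∀ k, k ≠ i₀ → w₀ k = u k := by
        intro k hk; rw [hi₀, Function.update_of_ne hk]
      have hw0v : ∀ k, k ≠ j₀ → w₀ k = v k := by
        intro k hk; rw [hj₀, Function.update_of_ne hk]
      have hiu : w i ≠ u i := by rw [hi, Function.update_self]; cases u i <;> simp
      have hi0u : w₀ i₀ ≠ u i₀ := by rw [hi₀, Function.update_self]; cases u i₀ <;> simp
      -- claim: u i ≠ v i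
      have hD : ∀ k, u k ≠ v k → (k = i ∨ k = j) := by
        intro k hk
        by_contra hc
        push_neg at hc
        have := hwu k hc.1
        rw [hwv k hc.2] at this
        exact hk this.symm
      have hD₀ : ∀ k, u k ≠ v k → (k = i₀ ∨ k = j₀) := by
        intro k hk
        by_contra hc
        push_neg at hc
        have := hw0u k hc.1
        rw [hw0v k hc.2] at this
        exact hk this.symm
      -- u i ≠ v i : if i = j then u = v off i and at i, contradiction
      have huvi : u i ≠ v i := by
        by_cases hij : i = j
        · -- then u = v everywhere else
          intro hEq
          apply huv
          funext k
          by_cases hki : k = i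
          · subst hki; exact hEq
          · rw [← hwu k hki, hwv k (by rw [← hij]; exact hki)]
        · intro hEq
          have hwj : w i = v i := hwv i hij
          rw [hwj, ← hEq] at hiu
          exact hiu rfl
      rcases hD₀ i huvi with h' | h' <;> rw [Finset.mem_insert, Finset.mem_singleton]
      · left; rw [hi, h']
      · right; rw [hi, h']
    have h2 : ({Function.update u i₀ (!u i₀), Function.update u j₀ (!u j₀)} :
        Finset (Fin n → Bool)).card ≤ 2 := by
      apply le_trans (Finset.card_insert_le _ _)
      simp
    exact le_trans (Finset.card_le_card key) h2

theorem distinguishable_symmDiff_ge_three (n h : ℕ) (hn : 3 ≤ n) (hh1 : 1 ≤ h)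
    (hhn : h ≤ n - 1) (Fe : Set (Sym2 (Fin n → Bool)))
    (hFe : Fe ⊆ (Qn n).edgeSet) (hFec : Fe.ncard ≤ h)
    (F₁ F₂ : Set (Fin n → Bool))
    (h1 : F₁.ncard ≤ n - h) (h2 : F₂.ncard ≤ n - h)
    (hΔ : 3 ≤ (symmDiff F₁ F₂).ncard) :
    ∃ x, x ∉ F₁ ∪ F₂ ∧ ∃ y ∈ symmDiff F₁ F₂, ((Qn n).deleteEdges Fe).Adj x y := by
  classical
  by_contra hcon
  push_neg at hcon
  set A : Finset (Fin n → Bool) := (Set.toFinite F₁).toFinset with hA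
  set B : Finset (Fin n → Bool) := (Set.toFinite F₂).toFinset with hB
  set S : Finset (Fin n → Bool) := symmDiff A B with hS
  have hmemA : ∀ x, x ∈ A ↔ x ∈ F₁ := fun x => Set.Finite.mem_toFinset _
  have hmemB : ∀ x, x ∈ B ↔ x ∈ F₂ := fun x => Set.Finite.mem_toFinset _
  have hmemS : ∀ x, x ∈ S ↔ x ∈ symmDiff F₁ F₂ := by
    intro x
    rw [hS, Finset.mem_symmDiff, Set.mem_symmDiff, hmemA, hmemB]
  -- cardinalities
  have hcardA : A.card ≤ n - h := by
    rw [hA, ← Set.ncard_eq_toFinset_card _ (Set.toFinite F₁)]; exact h1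
  have hcardB : B.card ≤ n - h := by
    rw [hB, ← Set.ncard_eq_toFinset_card _ (Set.toFinite F₂)]; exact h2
  have hcardS : 3 ≤ S.card := by
    have : S = (Set.toFinite (symmDiff F₁ F₂)).toFinset := by
      ext x; rw [Set.Finite.mem_toFinset, hmemS]
    rw [this, ← Set.ncard_eq_toFinset_card _ (Set.toFinite _)]; exact hΔ
  have hSdiff : S = (A ∪ B) \ (A ∩ B) := by
    ext x
    simp only [hS, Finset.mem_symmDiff, Finset.mem_sdiff, Finset.mem_union, Finset.mem_inter]
    tauto
  have hinter : S.card + (A ∩ B).card = (A ∪ B).card := by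
    rw [hSdiff]
    exact Finset.card_sdiff_add_card_eq_card (Finset.inter_subset_union)
  have hui : (A ∪ B).card + (A ∩ B).card = A.card + B.card :=
    Finset.card_union_add_card_inter A B
  -- parity pigeonhole
  have hZone : ∀ a : ZMod 2, a ≠ 0 ↔ a = 1 := by decide
  have hZone' : ∀ a : ZMod 2, a ≠ 1 ↔ a = 0 := by decide
  have hneg : S.filter (fun a => ¬ par a = 0) = S.filter (fun x => par x = 1) :=
    Finset.filter_congr (fun x _ => by simp [hZone])
  have hsplit := Finset.card_filter_add_card_filter_not (s := S) (p := fun x => par x = 0)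
  rw [hneg] at hsplit
  obtain ⟨t, ht2, htop⟩ : ∃ t : ZMod 2, 2 ≤ (S.filter (fun x => par x = t)).card ∧
      2 * (S.filter (fun x => par x ≠ t)).card ≤ S.card := by
    have hf1 : S.filter (fun x => par x ≠ (1 : ZMod 2)) = S.filter (fun x => par x = 0) :=
      Finset.filter_congr (fun x _ => by simp [hZone' (par x)])
    have hf0 : S.filter (fun x => par x ≠ (0 : ZMod 2)) = S.filter (fun x => par x = 1) := by
      apply Finset.filter_congr; intro x _; exact hZone (par x)
    rcases le_total ((S.filter (fun x => par x = 0)).card)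
        ((S.filter (fun x => par x = 1)).card) with hle | hle
    · exact ⟨1, by omega, by rw [hf1]; omega⟩
    · exact ⟨0, by omega, by rw [hf0]; omega⟩
  obtain ⟨u₁, hu₁, u₂, hu₂, hu12⟩ := Finset.one_lt_card.mp (by omega : 1 < (S.filter (fun x => par x = t)).card)
  rw [Finset.mem_filter] at hu₁ hu₂
  obtain ⟨hu₁S, hu₁t⟩ := hu₁
  obtain ⟨hu₂S, hu₂t⟩ := hu₂
  -- the neighborhood union
  set X : Finset (Fin n → Bool) := nbr u₁ ∪ nbr u₂ with hX
  have hXcard : 2 * n ≤ X.card + 2 := by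
    have := Finset.card_union_add_card_inter (nbr u₁) (nbr u₂)
    rw [card_nbr, card_nbr, ← hX] at this
    have hcc := card_common hu12
    omega
  set C : Finset (Fin n → Bool) := X \ (A ∪ B) with hC
  have hparX : ∀ x ∈ X, par x = t + 1 := by
    intro x hx
    rcases Finset.mem_union.mp hx with hx | hx
    · rw [par_nbr hx, hu₁t]
    · rw [par_nbr hx, hu₂t]
  have hsub : X ∩ (A ∪ B) ⊆ S.filter (fun x => par x ≠ t) ∪ (A ∩ B) := by
    intro x hx
    rw [Finset.mem_inter] at hx
    obtain ⟨hxX, hxAB⟩ := hx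
    rw [Finset.mem_union]
    by_cases hmem : x ∈ A ∩ B
    · right; exact hmem
    · left
      rw [Finset.mem_filter]
      refine ⟨?_, ?_⟩
      · rw [hSdiff, Finset.mem_sdiff]; exact ⟨hxAB, hmem⟩
      · rw [hparX x hxX]
        have : ∀ a : ZMod 2, a + 1 ≠ a := by decide
        exact this t
  have hCX : C.card + (X ∩ (A ∪ B)).card = X.card := by
    rw [hC]
    have hcs := Finset.card_sdiff_add_card_eq_card
      (Finset.inter_subset_left : X ∩ (A ∪ B) ⊆ X)
    rwa [Finset.sdiff_inter_self_left] at hcs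
  have hC1 : X.card ≤ C.card + (S.filter (fun x => par x ≠ t)).card + (A ∩ B).card := by
    have hle := Finset.card_le_card hsub
    have hle2 := Finset.card_union_le (S.filter (fun x => par x ≠ t)) (A ∩ B)
    omega
  have hCcard : h + 1 ≤ C.card := by omega
  -- injection into Fe
  have hu₁AB : u₁ ∈ A ∪ B := by
    rw [hSdiff, Finset.mem_sdiff] at hu₁S; exact hu₁S.1
  have hu₂AB : u₂ ∈ A ∪ B := by
    rw [hSdiff, Finset.mem_sdiff] at hu₂S; exact hu₂S.1
  set f : (Fin n → Bool) → Sym2 (Fin n → Bool) :=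
    fun x => if x ∈ nbr u₁ then s(x, u₁) else s(x, u₂) with hf
  have hedge : ∀ x ∈ C, ∀ u, u ∈ S → x ∈ nbr u → s(x, u) ∈ Fe := by
    intro x hxC u huS hxu
    rw [hC, Finset.mem_sdiff] at hxC
    have hxF : x ∉ F₁ ∪ F₂ := by
      intro hns
      apply hxC.2
      rcases hns with hh | hh
      · exact Finset.mem_union_left _ ((hmemA x).mpr hh)
      · exact Finset.mem_union_right _ ((hmemB x).mpr hh)
    have hadj : (Qn n).Adj x u := by
      show hammingDist x u = 1
      rw [hammingDist_comm]
      exact mem_nbr.mp hxu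
    have := hcon x hxF u ((hmemS u).mp huS)
    rw [SimpleGraph.deleteEdges_adj] at this
    by_contra hne
    exact this ⟨hadj, hne⟩
  have hmaps : ∀ x ∈ C, f x ∈ (Set.toFinite Fe).toFinset := by
    intro x hxC
    rw [Set.Finite.mem_toFinset]
    simp only [hf]
    by_cases hx1 : x ∈ nbr u₁
    · rw [if_pos hx1]; exact hedge x hxC u₁ hu₁S hx1
    · rw [if_neg hx1]
      have hxX : x ∈ X := (Finset.mem_sdiff.mp hxC).1
      have hx2 : x ∈ nbr u₂ := by
        rcases Finset.mem_union.mp hxX with hh | hh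
        · exact absurd hh hx1
        · exact hh
      exact hedge x hxC u₂ hu₂S hx2
  have hCnotAB : ∀ x ∈ C, x ∉ A ∪ B := fun x hx => (Finset.mem_sdiff.mp hx).2
  have hinj : Set.InjOn f C := by
    intro x hx y hy hxy
    simp only [hf] at hxy
    have hxn := hCnotAB x hx
    have hyn := hCnotAB y hy
    split_ifs at hxy with p q q
    all_goals {
      rw [Sym2.eq_iff] at hxy
      rcases hxy with ⟨rfl, -⟩ | ⟨rfl, rfl⟩
      · rfl
      · first
        | exact absurd hu₁AB hxn
        | exact absurd hu₂AB hxn }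
  have hle := Finset.card_le_card_of_injOn f hmaps hinj
  rw [← Set.ncard_eq_toFinset_card _ (Set.toFinite Fe)] at hle
  omega
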